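/- Let p be an odd prime and a a nonzero rational. Define G(x, y) = (a − y^p/(a − x)^(p−2), y^((p−1)/2)/(a − x)^((p−3)/2)). If (x, y) satisfies y^p = x·(a − x)^(p−2) with x ≠ a and y ≠ 0, then G(x, y) = (X, Y) satisfies Y^p = X·(a − X)^((p−1)/2). Moreover, G is inverse to the map F(x, y) = (a − y^p/(a − x)^((p−1)/2), y^(p−2)/(a − x)^((p−3)/2)) on points with x ≠ a, y ≠ 0. -/

import Mathlib

theorem stmt15 (p : ℕ) (hp : p.Prime) (hodd : Odd p) (a : ℚ) (ha : a ≠ 0)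
    (x y : ℚ) (hxa : x ≠ a) (hy : y ≠ 0)
    (hcurve : y ^ p = x * (a - x) ^ (p - 2))
    (X Y : ℚ)
    (hX : X = a - y ^ p / (a - x) ^ (p - 2))
    (hY : Y = y ^ ((p - 1) / 2) / (a - x) ^ ((p - 3) / 2)) :
    Y ^ p = X * (a - X) ^ ((p - 1) / 2) ∧
    a - Y ^ p / (a - X) ^ ((p - 1) / 2) = x ∧
    Y ^ (p - 2) / (a - X) ^ ((p - 3) / 2) = y := by
  obtain ⟨n, rfl⟩ : ∃ n, p = 2 * n + 3 := by
    obtain ⟨m, hm⟩ := hodd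
    have h1 := hp.two_le
    exact ⟨m - 1, by omega⟩
  simp only [show (2 * n + 3 - 1) / 2 = n + 1 from by omega,
    show (2 * n + 3 - 3) / 2 = n from by omega,
    show 2 * n + 3 - 2 = 2 * n + 1 from by omega] at hcurve hX hY ⊢
  have hd : a - x ≠ 0 := sub_ne_zero.mpr fun h => hxa h.symm
  have hx0 : x ≠ 0 := by
    intro h
    apply hy
    have : y ^ (2 * n + 3) = 0 := by rw [hcurve, h, zero_mul]
    exact pow_eq_zero_iff (by omega) |>.mp this
  have hX' : X = a - x := by
    rw [hX, hcurve]
    field_simp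
  have haX : a - X = x := by rw [hX']; ring
  have key1 : y ^ ((n + 1) * (2 * n + 3)) =
      x ^ (n + 1) * (a - x) ^ (n * (2 * n + 3)) * (a - x) := by
    rw [mul_comm (n + 1), pow_mul, hcurve, mul_pow, ← pow_mul,
      show (2 * n + 1) * (n + 1) = n * (2 * n + 3) + 1 from by ring, pow_succ]
    ring
  have key3 : y ^ ((n + 1) * (2 * n + 1)) =
      x ^ n * (a - x) ^ (n * (2 * n + 1)) * y := by
    rw [show (n + 1) * (2 * n + 1) = (2 * n + 3) * n + 1 from by ring, pow_succ,
      pow_mul, hcurve, mul_pow, ← pow_mul]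
    ring
  have g1 : Y ^ (2 * n + 3) = X * (a - X) ^ (n + 1) := by
    rw [hY, hX', show a - (a - x) = x from by ring, div_pow, ← pow_mul, key1]
    field_simp
    ring
  refine ⟨g1, ?_, ?_⟩
  · rw [g1, haX, hX']
    field_simp
    ring
  · rw [haX, hY, div_pow, ← pow_mul, key3]
    field_simp
    ring
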